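/- If every pair of nonadjacent vertices x, y in a graph G on n ≥ 3 vertices satisfies deg(x) + deg(y) ≥ n + 1, then G is Hamiltonian-connected, i.e., between any two vertices there is a Hamiltonian path. -/

import Mathlib

set_option linter.unusedSectionVars false
set_option maxHeartbeats 1000000

open List

namespace StmtAux

variable {V : Type*} [Fintype V] [DecidableEq V]


/-- A Hamiltonian `x`-`y` path, as a list. -/
def HamList (G : SimpleGraph V) (x y : V) (l : List V) : Prop :=
  l.Chain' G.Adj ∧ (∀ a, l.count a = 1) ∧ l.head? = some x ∧ l.getLast? = some y

lemma walk_of_chain (G : SimpleGraph V) :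
    ∀ (l : List V) (hl : l ≠ []), l.Chain' G.Adj →
      ∃ p : G.Walk (l.head hl) (l.getLast hl), p.support = l
  | [], hl, _ => absurd rfl hl
  | [a], _, _ => ⟨SimpleGraph.Walk.nil, rfl⟩
  | a :: b :: t, _, hc => by
      obtain ⟨hab, hc'⟩ := List.isChain_cons_cons.1 hc
      obtain ⟨p, hp⟩ := walk_of_chain G (b :: t) (by simp) hc'
      refine ⟨(SimpleGraph.Walk.cons hab p).copy rfl ((List.getLast_cons (by simp)).symm), ?_⟩
      exact (SimpleGraph.Walk.support_copy ..).trans (congrArg (a :: ·) hp)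

lemma hamList_to_walk {G : SimpleGraph V} {x y : V} {l : List V} (h : HamList G x y l) :
    ∃ p : G.Walk x y, p.IsHamiltonian := by
  obtain ⟨hc, hcnt, hhd, hlast⟩ := h
  have hl : l ≠ [] := by rintro rfl; simp at hhd
  obtain ⟨p, hp⟩ := walk_of_chain G l hl hc
  have hx : l.head hl = x := by rwa [List.head?_eq_head hl, Option.some_inj] at hhd
  have hy : l.getLast hl = y := by rwa [List.getLast?_eq_getLast hl, Option.some_inj] at hlast
  refine ⟨p.copy hx hy, fun a => ?_⟩
  rw [SimpleGraph.Walk.support_copy, hp]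
  exact hcnt a

lemma chain'_imp_mem {P Q : V → V → Prop} :
    ∀ (s : List V), (∀ a b, a ∈ s → b ∈ s → Q a b → P a b) → s.Chain' Q → s.Chain' P
  | [], _, _ => List.isChain_nil
  | [a], _, _ => List.isChain_singleton a
  | a :: b :: t, h, hc => by
      obtain ⟨hab, hc'⟩ := List.isChain_cons_cons.1 hc
      exact List.isChain_cons_cons.2 ⟨h a b (by simp) (by simp) hab,
        chain'_imp_mem (b :: t) (fun p q hp hq => h p q (by simp [hp]) (by simp [hq])) hc'⟩

lemma exists_bad {P Q : V → V → Prop} :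
    ∀ (l : List V), l.Chain' Q → ¬ l.Chain' P →
      ∃ (L R : List V) (a b : V), l = L ++ a :: b :: R ∧ Q a b ∧ ¬ P a b
  | [], _, hp => absurd List.isChain_nil hp
  | [a], _, hp => absurd (List.isChain_singleton a) hp
  | a :: b :: t, hq, hp => by
      obtain ⟨hab, hq'⟩ := List.isChain_cons_cons.1 hq
      by_cases h : P a b
      · have hp' : ¬ (b :: t).Chain' P := fun hc => hp (List.isChain_cons_cons.2 ⟨h, hc⟩)
        obtain ⟨L, R, c, d, heq, h1, h2⟩ := exists_bad (b :: t) hq' hp'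
        exact ⟨a :: L, R, c, d, by rw [List.cons_append, ← heq], h1, h2⟩
      · exact ⟨[], t, a, b, rfl, hab, h⟩

lemma complete_case (G : SimpleGraph V) (hall : ∀ a b : V, a ≠ b → G.Adj a b)
    {x y : V} (hxy : x ≠ y) : ∃ l, HamList G x y l := by
  classical
  set M : List V := ((Finset.univ.erase y).erase x).toList with hM
  have hxM : x ∉ M := by simp [hM]
  have hyM : y ∉ M := by simp [hM]
  have hndM : M.Nodup := Finset.nodup_toList _
  have hnd : (x :: (M ++ [y])).Nodup := by
    rw [List.nodup_cons, List.nodup_append]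
    refine ⟨by simp [hxM, hxy], hndM, by simp, ?_⟩
    intro a ha
    simp only [List.mem_singleton]
    rintro _ rfl rfl
    exact hyM ha
  have hmem : ∀ a : V, a ∈ x :: (M ++ [y]) := by
    intro a
    by_cases h1 : a = x
    · simp [h1]
    by_cases h2 : a = y
    · simp [h2]
    · have : a ∈ M := by simp [hM, h1, h2]
      simp [this]
  refine ⟨x :: (M ++ [y]), ?_, ?_, rfl, ?_⟩
  · exact List.IsChain.imp (fun a b h => hall a b h) hnd.isChain
  · exact fun a => List.count_eq_one_of_mem hnd (hmem a)
  · rw [show x :: (M ++ [y]) = (x :: M) ++ [y] by simp, List.getLast?_concat]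



lemma chain'_reverse_adj {G : SimpleGraph V} {l : List V} (h : l.Chain' G.Adj) :
    l.reverse.Chain' G.Adj :=
  List.isChain_reverse.2 (List.IsChain.imp (fun _ _ hab => hab.symm) h)

lemma rotateRight' {G : SimpleGraph V} {u v w z : V} {L R M N : List V}
    (hB : v :: R = M ++ w :: z :: N)
    (hchA : (L ++ [u]).Chain' G.Adj) (hchB : (v :: R).Chain' G.Adj)
    (huw : G.Adj u w) (hvz : G.Adj v z) :
    ∃ l' : List V, l'.Chain' G.Adj ∧ l' ~ (L ++ u :: v :: R) ∧
      l'.head? = (L ++ u :: v :: R).head? ∧ l'.getLast? = (L ++ u :: v :: R).getLast? := by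
  have hBsplit : v :: R = (M ++ [w]) ++ z :: N := by simp [hB]
  have hhdB : (M ++ [w]).head? = some v := by
    have h0 : ((M ++ [w]) ++ z :: N).head? = some v := by rw [← hBsplit]; rfl
    rwa [List.head?_append_of_ne_nil _ (by simp)] at h0
  obtain ⟨hchM, hchN, -⟩ := List.isChain_append.1 (hBsplit ▸ hchB)
  refine ⟨(L ++ [u]) ++ ((M ++ [w]).reverse ++ z :: N), ?_, ?_, ?_, ?_⟩
  · refine List.isChain_append.2 ⟨hchA, List.isChain_append.2
      ⟨chain'_reverse_adj hchM, hchN, ?_⟩, ?_⟩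
    · intro a ha b hb
      rw [List.getLast?_reverse, hhdB] at ha
      simp only [List.head?_cons, Option.mem_some_iff] at ha hb
      rw [← ha, ← hb] at *
      exact hvz
    · intro a ha b hb
      rw [List.getLast?_concat, Option.mem_some_iff] at ha
      rw [List.head?_append_of_ne_nil _ (by simp), List.head?_reverse,
        List.getLast?_concat, Option.mem_some_iff] at hb
      rw [← ha, ← hb] at *
      exact huw
  · have h1 : (M ++ [w]).reverse ++ z :: N ~ (M ++ [w]) ++ z :: N :=
      (List.reverse_perm (M ++ [w])).append_right _
    calc (L ++ [u]) ++ ((M ++ [w]).reverse ++ z :: N)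
        ~ (L ++ [u]) ++ ((M ++ [w]) ++ z :: N) := h1.append_left _
      _ = L ++ u :: v :: R := by rw [← hBsplit]; simp
  · rw [List.head?_append_of_ne_nil _ (by simp : L ++ [u] ≠ []),
      show L ++ u :: v :: R = (L ++ [u]) ++ v :: R by simp,
      List.head?_append_of_ne_nil _ (by simp : L ++ [u] ≠ [])]
  · rw [show (L ++ [u]) ++ ((M ++ [w]).reverse ++ z :: N)
        = ((L ++ [u]) ++ (M ++ [w]).reverse) ++ z :: N by simp,
      List.getLast?_append_of_ne_nil _ (by simp : (z :: N) ≠ []),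
      show L ++ u :: v :: R = ((L ++ [u]) ++ (M ++ [w])) ++ z :: N by rw [hBsplit]; simp,
      List.getLast?_append_of_ne_nil _ (by simp : (z :: N) ≠ [])]

lemma rotateLeft' {G : SimpleGraph V} {u v w z : V} {L R M N : List V}
    (hA : L ++ [u] = M ++ w :: z :: N)
    (hchA : (L ++ [u]).Chain' G.Adj) (hchB : (v :: R).Chain' G.Adj)
    (huw : G.Adj u w) (hvz : G.Adj v z) :
    ∃ l' : List V, l'.Chain' G.Adj ∧ l' ~ (L ++ u :: v :: R) ∧
      l'.head? = (L ++ u :: v :: R).head? ∧ l'.getLast? = (L ++ u :: v :: R).getLast? := by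
  have hB' : u :: L.reverse = N.reverse ++ z :: w :: M.reverse := by
    have := congrArg List.reverse hA
    simpa using this
  have hchA' : (R.reverse ++ [v]).Chain' G.Adj := by
    have := chain'_reverse_adj hchB; simpa using this
  have hchB' : (u :: L.reverse).Chain' G.Adj := by
    have := chain'_reverse_adj hchA; simpa using this
  obtain ⟨l'', h1, h2, h3, h4⟩ := rotateRight' (L := R.reverse) (R := L.reverse)
    (M := N.reverse) (N := M.reverse) hB' hchA' hchB' hvz huw
  have hrev : R.reverse ++ v :: u :: L.reverse = (L ++ u :: v :: R).reverse := by simp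
  rw [hrev] at h2 h3 h4
  refine ⟨l''.reverse, chain'_reverse_adj h1, ?_, ?_, ?_⟩
  · exact (List.reverse_perm l'').trans (h2.trans (List.reverse_perm _))
  · rw [List.head?_reverse, h4, List.getLast?_reverse]
  · rw [List.getLast?_reverse, h3, List.head?_reverse]

lemma rotate {G : SimpleGraph V} [DecidableRel G.Adj] {u v : V}
    (hd : Fintype.card V + 1 ≤ G.degree u + G.degree v)
    (L R : List V) (hcnt : ∀ a, (L ++ u :: v :: R).count a = 1)
    (hchA : (L ++ [u]).Chain' G.Adj) (hchB : (v :: R).Chain' G.Adj) :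
    ∃ l' : List V, l'.Chain' G.Adj ∧ l' ~ (L ++ u :: v :: R) ∧
      l'.head? = (L ++ u :: v :: R).head? ∧ l'.getLast? = (L ++ u :: v :: R).getLast? := by
  classical
  set n := Fintype.card V with hn
  set l : List V := L ++ u :: v :: R with hldef
  set i := L.length with hi
  have hmem : ∀ a : V, a ∈ l := fun a => List.count_pos_iff.1 (by rw [hcnt a]; norm_num)
  have hnd : l.Nodup := List.nodup_iff_count_le_one.2 fun a => le_of_eq (hcnt a)
  have huniv : l.toFinset = Finset.univ :=
    Finset.eq_univ_iff_forall.2 fun a => List.mem_toFinset.2 (hmem a)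
  have hlen : l.length = n := by
    rw [← List.toFinset_card_of_nodup hnd, huniv, hn, Finset.card_univ]
  have hlen2 : l.length = i + R.length + 2 := by
    simp only [hldef, List.length_append, List.length_cons]; omega
  have hil : i + 1 < n := by omega
  have hgi : l.getD i u = u := by
    rw [hldef, List.getD_append_right _ _ _ _ (le_of_eq hi.symm)]
    have h0 : i - L.length = 0 := by omega
    rw [h0]; rfl
  have hgi1 : l.getD (i + 1) u = v := by
    rw [hldef, List.getD_append_right _ _ _ _ (by omega : L.length ≤ i + 1)]
    have h0 : i + 1 - L.length = 1 := by omega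
    rw [h0]; rfl
  set S1 : Finset ℕ := (Finset.range (n - 1)).filter (fun j => G.Adj u (l.getD j u)) with hS1
  set S2 : Finset ℕ := (Finset.range (n - 1)).filter (fun j => G.Adj v (l.getD (j + 1) u))
    with hS2
  have hbig : ∀ t : V, G.degree t ≤
      ((Finset.range n).filter (fun j => G.Adj t (l.getD j u))).card := by
    intro t
    rw [← SimpleGraph.card_neighborFinset_eq_degree]
    apply Finset.card_le_card_of_injOn (fun w => l.idxOf w)
    · intro w hw
      rw [Finset.mem_coe, SimpleGraph.mem_neighborFinset] at hw
      have hlt : l.idxOf w < l.length := List.idxOf_lt_length_iff.2 (hmem w)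
      rw [Finset.mem_coe, Finset.mem_filter, Finset.mem_range]
      beta_reduce
      refine ⟨by omega, ?_⟩
      rw [List.getD_eq_getElem l u hlt, List.getElem_idxOf hlt]
      exact hw
    · intro w1 _ w2 _ heq
      exact (List.idxOf_inj (hmem w1)).1 heq
  have hdegu : G.degree u ≤ S1.card + 1 := by
    have h2 : (Finset.range n).filter (fun j => G.Adj u (l.getD j u)) ⊆ insert (n - 1) S1 := by
      intro j hj
      rw [Finset.mem_filter, Finset.mem_range] at hj
      rcases eq_or_ne j (n - 1) with rfl | hne
      · exact Finset.mem_insert_self _ _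
      · exact Finset.mem_insert_of_mem
          (by rw [hS1, Finset.mem_filter, Finset.mem_range]; exact ⟨by omega, hj.2⟩)
    calc G.degree u ≤ _ := hbig u
      _ ≤ (insert (n - 1) S1).card := Finset.card_le_card h2
      _ ≤ S1.card + 1 := Finset.card_insert_le _ _
  have hdegv : G.degree v ≤ S2.card + 1 := by
    have h2 : (Finset.range n).filter (fun j => G.Adj v (l.getD j u)) ⊆
        insert 0 (S2.image (· + 1)) := by
      intro j hj
      rw [Finset.mem_filter, Finset.mem_range] at hj
      rcases eq_or_ne j 0 with rfl | hne
      · exact Finset.mem_insert_self _ _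
      · refine Finset.mem_insert_of_mem (Finset.mem_image.2 ⟨j - 1, ?_, by omega⟩)
        rw [hS2, Finset.mem_filter, Finset.mem_range]
        refine ⟨by omega, ?_⟩
        have h3 : j - 1 + 1 = j := by omega
        rw [h3]
        exact hj.2
    calc G.degree v ≤ _ := hbig v
      _ ≤ (insert 0 (S2.image (· + 1))).card := Finset.card_le_card h2
      _ ≤ (S2.image (· + 1)).card + 1 := Finset.card_insert_le _ _
      _ ≤ S2.card + 1 := by have := Finset.card_image_le (s := S2) (f := (· + 1)); omega
  have hiS1 : i ∉ S1 := by
    intro h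
    rw [hS1, Finset.mem_filter, hgi] at h
    exact G.loopless.irrefl u h.2
  have hiS2 : i ∉ S2 := by
    intro h
    rw [hS2, Finset.mem_filter, hgi1] at h
    exact G.loopless.irrefl v h.2
  have hinter : (S1 ∩ S2).Nonempty := by
    by_contra hcon
    rw [Finset.not_nonempty_iff_eq_empty] at hcon
    have hdisj : Disjoint S1 S2 := Finset.disjoint_iff_inter_eq_empty.2 hcon
    have hsub : S1 ∪ S2 ⊆ (Finset.range (n - 1)).erase i := by
      intro j hj
      rw [Finset.mem_erase]
      rcases Finset.mem_union.1 hj with h | h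
      · exact ⟨fun he => hiS1 (he ▸ h), Finset.mem_range.2 (Finset.mem_range.1
          (Finset.mem_of_mem_filter _ (by rwa [hS1] at h)))⟩
      · exact ⟨fun he => hiS2 (he ▸ h), Finset.mem_range.2 (Finset.mem_range.1
          (Finset.mem_of_mem_filter _ (by rwa [hS2] at h)))⟩
    have hcard2 := Finset.card_le_card hsub
    rw [Finset.card_union_of_disjoint hdisj,
      Finset.card_erase_of_mem (Finset.mem_range.2 (by omega)), Finset.card_range] at hcard2
    omega
  obtain ⟨j, hj⟩ := hinter
  have hj1 : j ∈ S1 := Finset.mem_of_mem_inter_left hj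
  have hj2 : j ∈ S2 := Finset.mem_of_mem_inter_right hj
  have hji : j ≠ i := fun he => hiS1 (he ▸ hj1)
  rw [hS1, Finset.mem_filter, Finset.mem_range] at hj1
  rw [hS2, Finset.mem_filter, Finset.mem_range] at hj2
  have hjn : j < n - 1 := hj1.1
  have hju : G.Adj u (l.getD j u) := hj1.2
  have hjv : G.Adj v (l.getD (j + 1) u) := hj2.2
  rcases Nat.lt_or_ge j i with hcase | hcase
  · -- pattern inside L ++ [u]
    have hAlen : (L ++ [u]).length = i + 1 := by simp [hi]
    have hjA : j < (L ++ [u]).length := by omega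
    have hj1A : j + 1 < (L ++ [u]).length := by omega
    have hgdj : l.getD j u = (L ++ [u])[j] := by
      rw [hldef, show L ++ u :: v :: R = (L ++ [u]) ++ v :: R by simp,
        List.getD_append _ _ _ _ hjA, List.getD_eq_getElem _ u hjA]
    have hgdj1 : l.getD (j + 1) u = (L ++ [u])[j + 1] := by
      rw [hldef, show L ++ u :: v :: R = (L ++ [u]) ++ v :: R by simp,
        List.getD_append _ _ _ _ hj1A, List.getD_eq_getElem _ u hj1A]
    have hdecomp : L ++ [u] = (L ++ [u]).take j ++
        (L ++ [u])[j] :: (L ++ [u])[j + 1] :: (L ++ [u]).drop (j + 2) := by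
      conv_lhs => rw [← List.take_append_drop j (L ++ [u])]
      rw [List.drop_eq_getElem_cons hjA, List.drop_eq_getElem_cons hj1A]
    exact rotateLeft' hdecomp hchA hchB (hgdj ▸ hju) (hgdj1 ▸ hjv)
  · -- pattern inside v :: R
    have hii : i < j := lt_of_le_of_ne hcase (Ne.symm (by omega))
    have hAlen : (L ++ [u]).length = i + 1 := by simp [hi]
    have hBlen : (v :: R).length = R.length + 1 := by simp
    have hkB : j - (i + 1) < (v :: R).length := by omega
    have hk1B : j - (i + 1) + 1 < (v :: R).length := by omega
    have hgdj : l.getD j u = (v :: R)[j - (i + 1)] := by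
      rw [hldef, show L ++ u :: v :: R = (L ++ [u]) ++ v :: R by simp,
        List.getD_append_right _ _ _ _ (by omega : (L ++ [u]).length ≤ j), hAlen,
        List.getD_eq_getElem _ u hkB]
    have hgdj1 : l.getD (j + 1) u = (v :: R)[j - (i + 1) + 1] := by
      rw [hldef, show L ++ u :: v :: R = (L ++ [u]) ++ v :: R by simp,
        List.getD_append_right _ _ _ _ (by omega : (L ++ [u]).length ≤ j + 1), hAlen,
        show j + 1 - (i + 1) = j - (i + 1) + 1 by omega, List.getD_eq_getElem _ u hk1B]
    have hdecomp : v :: R = (v :: R).take (j - (i + 1)) ++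
        (v :: R)[j - (i + 1)] :: (v :: R)[j - (i + 1) + 1] :: (v :: R).drop (j - (i + 1) + 2) := by
      conv_lhs => rw [← List.take_append_drop (j - (i + 1)) (v :: R)]
      rw [List.drop_eq_getElem_cons hkB, List.drop_eq_getElem_cons hk1B]
    exact rotateRight' hdecomp hchA hchB (hgdj ▸ hju) (hgdj1 ▸ hjv)

lemma chain_drop_edge {G : SimpleGraph V} {u v : V} (s : List V)
    (hm : u ∉ s ∨ v ∉ s) (hc : s.Chain' (G ⊔ SimpleGraph.edge u v).Adj) :
    s.Chain' G.Adj := by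
  refine chain'_imp_mem s (fun p q hp hq hpq => ?_) hc
  rcases (SimpleGraph.sup_adj _ _ _ _).1 hpq with h' | h'
  · exact h'
  · exfalso
    rcases ((SimpleGraph.edge_adj _ _ _ _).1 h').1 with ⟨rfl, rfl⟩ | ⟨rfl, rfl⟩
    · rcases hm with h | h
      · exact h hp
      · exact h hq
    · rcases hm with h | h
      · exact h hq
      · exact h hp

lemma del {G : SimpleGraph V} [DecidableRel G.Adj] {u v : V}
    (hd : Fintype.card V + 1 ≤ G.degree u + G.degree v)
    {x y : V} {l : List V} (h : HamList (G ⊔ SimpleGraph.edge u v) x y l) :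
    ∃ l', HamList G x y l' := by
  obtain ⟨hch, hcnt, hhd, hlast⟩ := h
  by_cases hc : l.Chain' G.Adj
  · exact ⟨l, hc, hcnt, hhd, hlast⟩
  obtain ⟨L, R, a, b, heq, hQ, hP⟩ := exists_bad l hch hc
  have hab : (a = u ∧ b = v) ∨ (a = v ∧ b = u) := by
    rcases (SimpleGraph.sup_adj _ _ _ _).1 hQ with h' | h'
    · exact absurd h' hP
    · exact ((SimpleGraph.edge_adj _ _ _ _).1 h').1
  subst heq
  have hnd : (L ++ a :: b :: R).Nodup :=
    List.nodup_iff_count_le_one.2 fun c => le_of_eq (hcnt c)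
  have hsplitnd : ((L ++ [a]) ++ b :: R).Nodup := by
    rw [show (L ++ [a]) ++ b :: R = L ++ a :: b :: R by simp]; exact hnd
  rw [List.nodup_append] at hsplitnd
  have hbL : b ∉ L ++ [a] := fun hmem => hsplitnd.2.2 b hmem b (by simp) rfl
  have haR : a ∉ b :: R := fun hmem => hsplitnd.2.2 a (by simp) a hmem rfl
  have hch2 : ((L ++ [a]) ++ b :: R).Chain' (G ⊔ SimpleGraph.edge u v).Adj := by
    rw [show (L ++ [a]) ++ b :: R = L ++ a :: b :: R by simp]; exact hch
  obtain ⟨hchA', hchB', -⟩ := List.isChain_append.1 hch2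
  rcases hab with ⟨rfl, rfl⟩ | ⟨rfl, rfl⟩
  · obtain ⟨l', h1, h2, h3, h4⟩ := rotate hd L R hcnt
      (chain_drop_edge _ (Or.inr hbL) hchA') (chain_drop_edge _ (Or.inl haR) hchB')
    exact ⟨l', h1, fun c => (h2.count_eq c).trans (hcnt c), h3.trans hhd, h4.trans hlast⟩
  · obtain ⟨l', h1, h2, h3, h4⟩ := rotate (by omega) L R hcnt
      (chain_drop_edge _ (Or.inl hbL) hchA') (chain_drop_edge _ (Or.inr haR) hchB')
    exact ⟨l', h1, fun c => (h2.count_eq c).trans (hcnt c), h3.trans hhd, h4.trans hlast⟩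

lemma degree_mono {G H : SimpleGraph V} [DecidableRel G.Adj] [DecidableRel H.Adj]
    (hGH : G ≤ H) (a : V) : G.degree a ≤ H.degree a := by
  apply Finset.card_le_card
  intro w hw
  rw [SimpleGraph.mem_neighborFinset] at *
  exact hGH hw

lemma main_aux : ∀ (m : ℕ) (G : SimpleGraph V) [DecidableRel G.Adj],
    Gᶜ.edgeFinset.card ≤ m →
    (∀ x y : V, x ≠ y → ¬ G.Adj x y → Fintype.card V + 1 ≤ G.degree x + G.degree y) →
    ∀ x y : V, x ≠ y → ∃ l, HamList G x y l := by
  intro m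
  induction m with
  | zero =>
    intro G _ hcard hdeg x y hxy
    refine complete_case G (fun a b hab => ?_) hxy
    by_contra hna
    have hmem : s(a, b) ∈ Gᶜ.edgeFinset := by
      rw [SimpleGraph.mem_edgeFinset, SimpleGraph.mem_edgeSet, SimpleGraph.compl_adj]
      exact ⟨hab, hna⟩
    have := Finset.card_pos.2 ⟨_, hmem⟩
    omega
  | succ m ih =>
    intro G _ hcard hdeg x y hxy
    by_cases hall : ∀ a b : V, a ≠ b → G.Adj a b
    · exact complete_case G hall hxy
    push_neg at hall
    obtain ⟨a, b, hab, hna⟩ := hall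
    set G' := G ⊔ SimpleGraph.edge a b with hG'
    have hle : G ≤ G' := le_sup_left
    have hG'adj : G'.Adj a b := by
      rw [hG', SimpleGraph.sup_adj, SimpleGraph.edge_adj]
      exact Or.inr ⟨Or.inl ⟨rfl, rfl⟩, hab⟩
    have hcompl : G'ᶜ ≤ Gᶜ := by
      intro c d hcd
      rw [SimpleGraph.compl_adj] at *
      exact ⟨hcd.1, fun h => hcd.2 (hle h)⟩
    have hsub : G'ᶜ.edgeFinset ⊆ Gᶜ.edgeFinset := SimpleGraph.edgeFinset_mono hcompl
    have hmem1 : s(a, b) ∈ Gᶜ.edgeFinset := by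
      rw [SimpleGraph.mem_edgeFinset, SimpleGraph.mem_edgeSet, SimpleGraph.compl_adj]
      exact ⟨hab, hna⟩
    have hmem2 : s(a, b) ∉ G'ᶜ.edgeFinset := by
      rw [SimpleGraph.mem_edgeFinset, SimpleGraph.mem_edgeSet, SimpleGraph.compl_adj]
      rintro ⟨-, h⟩
      exact h hG'adj
    have hlt : G'ᶜ.edgeFinset.card < Gᶜ.edgeFinset.card :=
      Finset.card_lt_card ((Finset.ssubset_iff_of_subset hsub).2 ⟨_, hmem1, hmem2⟩)
    have hdeg' : ∀ p q : V, p ≠ q → ¬ G'.Adj p q →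
        Fintype.card V + 1 ≤ G'.degree p + G'.degree q := fun p q hpq hna' =>
      le_trans (hdeg p q hpq (fun h => hna' (hle h)))
        (add_le_add (degree_mono hle p) (degree_mono hle q))
    obtain ⟨l, hl⟩ := ih G' (by omega) hdeg' x y hxy
    exact del (hdeg a b hab hna) hl


end StmtAux

/-- Ore/Pósa-type condition for Hamiltonian-connectedness: if every pair of nonadjacent
vertices `x, y` of an `n`-vertex graph (`n ≥ 3`) satisfies `deg x + deg y ≥ n + 1`,
then between any two distinct vertices there is a Hamiltonian path. -/
theorem stmt_3 {V : Type*} [Fintype V] [DecidableEq V] (G : SimpleGraph V)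
    [DecidableRel G.Adj] (hn : 3 ≤ Fintype.card V)
    (hdeg : ∀ x y : V, x ≠ y → ¬ G.Adj x y →
      Fintype.card V + 1 ≤ G.degree x + G.degree y) :
    ∀ x y : V, x ≠ y → ∃ p : G.Walk x y, p.IsHamiltonian := by
  intro x y hxy
  obtain ⟨l, hl⟩ := StmtAux.main_aux Gᶜ.edgeFinset.card G le_rfl hdeg x y hxy
  exact StmtAux.hamList_to_walk hl
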